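/- Fix n ≥ 1. Let J_X, X ⊆ {1,…,n}, be independent real random variables with finite second moments such that Σ_{X⊆{1,…,n}} Var(J_X) ≤ C_P n for some constant C_P > 0. Then the pressure P_n = n⁻¹ ln Σ_{σ∈{±1}ⁿ} exp(Σ_X J_X σ_X) satisfies E[(P_n − E P_n)²] ≤ C_P/n. No sign assumption on the couplings is needed. -/

import Mathlib

open MeasureTheory ProbabilityTheory Finset

noncomputable section

/-- The real value of a Boolean spin: `true ↦ 1`, `false ↦ -1`. -/
def spinVal (b : Bool) : ℝ := if b then 1 else -1

/-- The product of spins over a subset `X ⊆ {1,…,n}`. -/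
def spinProd {n : ℕ} (X : Finset (Fin n)) (σ : Fin n → Bool) : ℝ :=
  ∏ i ∈ X, spinVal (σ i)

/-- The perturbed Hamiltonian
`H(σ) = -∑_X J_X σ_X - h₀ ∑ᵢ σᵢ - h₁ ∑ᵢ τᵢ σᵢ`. -/
def Ham (n : ℕ) (J : Finset (Fin n) → ℝ) (h₀ h₁ : ℝ) (τ : Fin n → ℕ)
    (σ : Fin n → Bool) : ℝ :=
  -(∑ X : Finset (Fin n), J X * spinProd X σ)
    - h₀ * ∑ i, spinVal (σ i) - h₁ * ∑ i, (τ i : ℝ) * spinVal (σ i)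

/-- The partition function `Z = ∑_σ e^{-H(σ)}`. -/
def Zp (n : ℕ) (H : (Fin n → Bool) → ℝ) : ℝ :=
  ∑ σ : Fin n → Bool, Real.exp (-(H σ))

/-- The Gibbs average `⟨f⟩ = Z⁻¹ ∑_σ f(σ) e^{-H(σ)}`. -/
def gibbs (n : ℕ) (H : (Fin n → Bool) → ℝ) (f : (Fin n → Bool) → ℝ) : ℝ :=
  (∑ σ : Fin n → Bool, f σ * Real.exp (-(H σ))) / Zp n H

/-- The replicated Gibbs average of a function of `k` i.i.d. replicas. -/
def gibbsRep (n k : ℕ) (H : (Fin n → Bool) → ℝ)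
    (f : (Fin k → Fin n → Bool) → ℝ) : ℝ :=
  (∑ σs : Fin k → Fin n → Bool, f σs * ∏ a, Real.exp (-(H (σs a)))) / (Zp n H) ^ k

/-- The multi-overlap `Q_k = n⁻¹ ∑ᵢ σᵢ⁽¹⁾⋯σᵢ⁽ᵏ⁾` of `k` replicas. -/
def QkRep (n k : ℕ) (σs : Fin k → Fin n → Bool) : ℝ :=
  (n : ℝ)⁻¹ * ∑ i, ∏ a, spinVal (σs a i)

/-- The local magnetization `⟨σᵢ⟩`. -/
def magg (n : ℕ) (H : (Fin n → Bool) → ℝ) (i : Fin n) : ℝ :=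
  gibbs n H fun σ => spinVal (σ i)

/-- The two-point function `⟨σᵢσⱼ⟩`. -/
def corrr (n : ℕ) (H : (Fin n → Bool) → ℝ) (i j : Fin n) : ℝ :=
  gibbs n H fun σ => spinVal (σ i) * spinVal (σ j)

/-- `⟨Q_k⟩ = n⁻¹ ∑ᵢ ⟨σᵢ⟩ᵏ`, the Gibbs average of the multi-overlap. -/
def avgQ (n k : ℕ) (H : (Fin n → Bool) → ℝ) : ℝ :=
  gibbsRep n k H (QkRep n k)

/-- The product of `n` i.i.d. Poisson(`r`) distributions on `ℕⁿ`. -/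
def ppi (n : ℕ) (r : ℝ) : Measure (Fin n → ℕ) :=
  Measure.pi fun _ : Fin n => poissonMeasure (Real.toNNReal r)

end

namespace PressureConc

/-- Continuity of an `ℓ¹`-Lipschitz function on a finite product. -/
lemma continuous_of_l1_lip {ι : Type*} [Fintype ι] {f : (ι → ℝ) → ℝ} {L : ℝ}
    (hlip : ∀ x y, |f x - f y| ≤ L * ∑ i, |x i - y i|) : Continuous f := by
  rw [continuous_iff_continuousAt]
  intro x
  have h1 : Continuous fun y : ι → ℝ => L * ∑ i, |y i - x i| := by
    apply Continuous.mul continuous_const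
    exact continuous_finset_sum _ fun i _ =>
      ((continuous_apply i).sub continuous_const).abs
  have h0 : Filter.Tendsto (fun y : ι → ℝ => L * ∑ i, |y i - x i|)
      (nhds x) (nhds 0) := by
    have := h1.tendsto x
    simpa using this
  refine tendsto_iff_dist_tendsto_zero.2 ?_
  refine squeeze_zero (fun y => dist_nonneg) (fun y => ?_) h0
  rw [Real.dist_eq]
  exact hlip y x

lemma continuous_of_lip_one {h : ℝ → ℝ} {L : ℝ}
    (hlip : ∀ a b, |h a - h b| ≤ L * |a - b|) : Continuous h := by
  rw [continuous_iff_continuousAt]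
  intro x
  have h0 : Filter.Tendsto (fun a : ℝ => L * |a - x|) (nhds x) (nhds 0) := by
    have h1 : Continuous fun a : ℝ => L * |a - x| :=
      Continuous.mul continuous_const ((continuous_id.sub continuous_const).abs)
    have := h1.tendsto x
    simpa using this
  refine tendsto_iff_dist_tendsto_zero.2 ?_
  refine squeeze_zero (fun y => dist_nonneg) (fun y => ?_) h0
  rw [Real.dist_eq]
  exact hlip y x

/-- A Lipschitz function of an `L²` random variable is `L²`. -/
lemma memLp_of_lip_one (ν : Measure ℝ) [IsProbabilityMeasure ν] (hν2 : MemLp id 2 ν)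
    {h : ℝ → ℝ} {L : ℝ} (hlip : ∀ a b, |h a - h b| ≤ L * |a - b|) :
    MemLp h 2 ν := by
  have hc : Continuous h := continuous_of_lip_one hlip
  have hg : MemLp (fun t : ℝ => |h 0| + L * |t|) 2 ν := by
    refine (memLp_const (|h 0|)).add ?_
    exact (hν2.norm.const_mul L)
  refine hg.of_le hc.aestronglyMeasurable (Filter.Eventually.of_forall fun t => ?_)
  have h1 : |h t - h 0| ≤ L * |t - 0| := hlip t 0
  have h2 : 0 ≤ L * |t| := le_trans (abs_nonneg _) (by simpa using h1)
  simp only [Real.norm_eq_abs, sub_zero] at h1 ⊢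
  have : |h t| ≤ |h 0| + L * |t| := by
    have := abs_sub_abs_le_abs_sub (h t) (h 0)
    linarith
  calc |h t| ≤ |h 0| + L * |t| := this
    _ ≤ |(|h 0| + L * |t|)| := le_abs_self _

/-- Bias–variance expansion: `∫ (h-c)² = ∫ (h - ∫h)² + (∫h - c)²`. -/
lemma integral_sq_sub_const (ν : Measure ℝ) [IsProbabilityMeasure ν] {h : ℝ → ℝ}
    (hh : MemLp h 2 ν) (c : ℝ) :
    ∫ t, (h t - c) ^ 2 ∂ν
      = ∫ t, (h t - ∫ s, h s ∂ν) ^ 2 ∂ν + ((∫ s, h s ∂ν) - c) ^ 2 := by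
  set m := ∫ s, h s ∂ν with hm
  have hint : Integrable h ν := hh.integrable one_le_two
  have hsq : Integrable (fun t => (h t - m) ^ 2) ν := (hh.sub (memLp_const m)).integrable_sq
  have key : ∀ t, (h t - c) ^ 2
      = (h t - m) ^ 2 + ((2 * (m - c)) * (h t - m) + (m - c) ^ 2) := by
    intro t; ring
  have hmul : Integrable (fun t => (2 * (m - c)) * (h t - m)) ν := by
    exact ((hint.sub (integrable_const m)).const_mul _)
  have hrest : Integrable (fun t => (2 * (m - c)) * (h t - m) + (m - c) ^ 2) ν := by
    exact hmul.add (integrable_const _)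
  calc ∫ t, (h t - c) ^ 2 ∂ν
      = ∫ t, ((h t - m) ^ 2 + ((2 * (m - c)) * (h t - m) + (m - c) ^ 2)) ∂ν := by
        simp_rw [key]
    _ = ∫ t, (h t - m) ^ 2 ∂ν
        + (∫ t, (2 * (m - c)) * (h t - m) ∂ν + ∫ _t, (m - c) ^ 2 ∂ν) := by
        rw [integral_add hsq hrest, integral_add hmul (integrable_const _)]
    _ = ∫ t, (h t - m) ^ 2 ∂ν + (m - c) ^ 2 := by
        rw [integral_const_mul, integral_sub hint (integrable_const m)]
        simp [measure_univ, ← hm]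

/-- One-dimensional Lipschitz variance bound. -/
lemma var_le_of_lip_one (ν : Measure ℝ) [IsProbabilityMeasure ν] (hν2 : MemLp id 2 ν)
    {h : ℝ → ℝ} {L : ℝ} (hL : 0 ≤ L) (hlip : ∀ a b, |h a - h b| ≤ L * |a - b|) :
    ∫ t, (h t - ∫ s, h s ∂ν) ^ 2 ∂ν ≤ L ^ 2 * ∫ t, (t - ∫ s, s ∂ν) ^ 2 ∂ν := by
  have hh : MemLp h 2 ν := memLp_of_lip_one ν hν2 hlip
  set mid := ∫ s, s ∂ν with hmid
  have h1 : ∫ t, (h t - ∫ s, h s ∂ν) ^ 2 ∂ν ≤ ∫ t, (h t - h mid) ^ 2 ∂ν := by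
    rw [integral_sq_sub_const ν hh (h mid)]
    nlinarith [sq_nonneg ((∫ s, h s ∂ν) - h mid)]
  refine h1.trans ?_
  rw [← integral_const_mul]
  refine integral_mono ((hh.sub (memLp_const (h mid))).integrable_sq) ?_ fun t => ?_
  · exact ((hν2.sub (memLp_const mid)).integrable_sq).const_mul _
  · have := hlip t mid
    have h2 : (h t - h mid) ^ 2 ≤ (L * |t - mid|) ^ 2 := by
      rw [← sq_abs (h t - h mid)]
      exact pow_le_pow_left₀ (abs_nonneg _) this 2
    calc (h t - h mid) ^ 2 ≤ (L * |t - mid|) ^ 2 := h2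
      _ = L ^ 2 * (t - mid) ^ 2 := by rw [mul_pow, sq_abs]

lemma measurePreserving_eval {N : ℕ} (ν : Fin N → Measure ℝ)
    [∀ i, IsProbabilityMeasure (ν i)] (i : Fin N) :
    MeasurePreserving (fun x : Fin N → ℝ => x i) (Measure.pi ν) (ν i) := by
  refine ⟨measurable_pi_apply i, ?_⟩
  ext s hs
  rw [Measure.map_apply (measurable_pi_apply i) hs]
  have hpre : (fun x : Fin N → ℝ => x i) ⁻¹' s
      = Set.pi Set.univ (Function.update (fun _ : Fin N => (Set.univ : Set ℝ)) i s) := by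
    ext x
    simp only [Set.mem_preimage, Set.mem_pi, Set.mem_univ, true_implies]
    constructor
    · intro hx j
      rcases eq_or_ne j i with rfl | hj
      · simpa using hx
      · simp [Function.update_apply, hj]
    · intro hx
      simpa using hx i
  rw [hpre, Measure.pi_pi]
  rw [Fintype.prod_eq_single i]
  · simp
  · intro j hj
    simp [Function.update_apply, hj]

/-- An `ℓ¹`-Lipschitz function is in `L²` of a product of probability measures with
finite second moments. -/
lemma memLp_of_l1_lip {N : ℕ} (ν : Fin N → Measure ℝ)
    [∀ i, IsProbabilityMeasure (ν i)] (hν2 : ∀ i, MemLp id 2 (ν i))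
    {f : (Fin N → ℝ) → ℝ} {L : ℝ}
    (hlip : ∀ x y, |f x - f y| ≤ L * ∑ i, |x i - y i|) :
    MemLp f 2 (Measure.pi ν) := by
  have hc : Continuous f := continuous_of_l1_lip hlip
  have hco : ∀ i : Fin N, MemLp (fun x : Fin N → ℝ => |x i|) 2 (Measure.pi ν) := by
    intro i
    have := (hν2 i).comp_measurePreserving (measurePreserving_eval ν i)
    exact this.norm
  have hg : MemLp (fun x : Fin N → ℝ => |f 0| + L * ∑ i, |x i|) 2 (Measure.pi ν) := by
    refine (memLp_const (|f 0|)).add ?_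
    have h3 := (memLp_finset_sum' univ fun (i : Fin N) _ => hco i).const_mul L
    have he : (fun x : Fin N → ℝ => L * (∑ i : Fin N, fun y : Fin N → ℝ => |y i|) x)
        = fun x : Fin N → ℝ => L * ∑ i, |x i| := by
      funext x; simp [Finset.sum_apply]
    rwa [he] at h3
  refine hg.of_le hc.aestronglyMeasurable (Filter.Eventually.of_forall fun x => ?_)
  have h1 : |f x - f 0| ≤ L * ∑ i, |x i| := by simpa using hlip x 0
  have h2 : 0 ≤ L * ∑ i, |x i| := le_trans (abs_nonneg _) h1
  simp only [Real.norm_eq_abs]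
  have : |f x| ≤ |f 0| + L * ∑ i, |x i| := by
    have := abs_sub_abs_le_abs_sub (f x) (f 0)
    linarith
  exact this.trans (le_abs_self _)

/-- Tensorization of variance for `ℓ¹`-Lipschitz functions of independent variables. -/
lemma var_tensor : ∀ (N : ℕ) (ν : Fin N → Measure ℝ)
    (_ : ∀ i, IsProbabilityMeasure (ν i)) (_ : ∀ i, MemLp id 2 (ν i))
    (L : ℝ) (_ : 0 ≤ L) (f : (Fin N → ℝ) → ℝ)
    (_ : ∀ x y, |f x - f y| ≤ L * ∑ i, |x i - y i|),
    ∫ x, (f x - ∫ y, f y ∂(Measure.pi ν)) ^ 2 ∂(Measure.pi ν)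
      ≤ L ^ 2 * ∑ i, ∫ t, (t - ∫ s, s ∂(ν i)) ^ 2 ∂(ν i) := by
  intro N
  induction N with
  | zero =>
    intro ν hp hν2 L hL f hlip
    haveI : ∀ i, IsProbabilityMeasure (ν i) := hp
    haveI : IsProbabilityMeasure (Measure.pi ν) := inferInstance
    have hconst : ∀ x, f x = f (fun i => Fin.elim0 i) := by
      intro x
      have h := hlip x (fun i => Fin.elim0 i)
      simp only [Finset.univ_eq_empty, Finset.sum_empty, mul_zero] at h
      have := abs_nonneg (f x - f fun i => Fin.elim0 i)
      have h0 : |f x - f fun i => Fin.elim0 i| = 0 := le_antisymm h this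
      have := abs_eq_zero.mp h0
      linarith
    have hf : f = fun _ => f (fun i => Fin.elim0 i) := funext hconst
    rw [hf]
    simp
  | succ N IH =>
    intro ν hp hν2 L hL f hlip
    haveI : ∀ i, IsProbabilityMeasure (ν i) := hp
    set π := Measure.pi ν with hπd
    haveI hππ : IsProbabilityMeasure π := by rw [hπd]; infer_instance
    set ν' : Fin N → Measure ℝ := fun j => ν j.succ with hν'd
    haveI : ∀ j, IsProbabilityMeasure (ν' j) := fun j => hp _
    have hν2' : ∀ j, MemLp id 2 (ν' j) := fun j => hν2 _
    set π' := Measure.pi ν' with hπ'd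
    haveI : IsProbabilityMeasure π' := by rw [hπ'd]; infer_instance
    set ρ := (ν 0).prod π' with hρd
    haveI : IsProbabilityMeasure ρ := by rw [hρd]; infer_instance
    set e := MeasurableEquiv.piFinSuccAbove (fun _ : Fin (N+1) => ℝ) 0 with hed
    have mp : MeasurePreserving e π ρ := by
      have h := measurePreserving_piFinSuccAbove ν 0
      simp only [Fin.succAbove_zero] at h
      exact h
    have hcons : ∀ p : ℝ × (Fin N → ℝ), e.symm p = Fin.cons p.1 p.2 := by
      intro p
      rw [hed]
      rw [MeasurableEquiv.piFinSuccAbove_symm_apply]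
      exact Fin.insertNth_zero' p.1 p.2
    set F : ℝ × (Fin N → ℝ) → ℝ := fun p => f (e.symm p) with hFd
    have hFlip : ∀ a b y y', |F (a, y) - F (b, y')|
        ≤ L * (|a - b| + ∑ j, |y j - y' j|) := by
      intro a b y y'
      have h := hlip (Fin.cons a y) (Fin.cons b y')
      rw [Fin.sum_univ_succ] at h
      simp only [Fin.cons_zero, Fin.cons_succ] at h
      simpa [hFd, hcons] using h
    have hfL2 : MemLp f 2 π := memLp_of_l1_lip ν hν2 hlip
    have hFL2 : MemLp F 2 ρ := by
      have h1 : MemLp (f ∘ e.symm) 2 ρ := hfL2.comp_measurePreserving (mp.symm e)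
      exact h1
    have hm : ∫ z, F z ∂ρ = ∫ x, f x ∂π := by
      rw [← mp.map_eq, integral_map_equiv]
      simp [hFd]
    set m := ∫ x, f x ∂π with hmd
    set g : (Fin N → ℝ) → ℝ := fun y => ∫ a, F (a, y) ∂(ν 0) with hgd
    have hsec : ∀ y a b, |F (a, y) - F (b, y)| ≤ L * |a - b| := by
      intro y a b
      have h := hFlip a b y y
      simpa using h
    have hsecL2 : ∀ y, MemLp (fun a => F (a, y)) 2 (ν 0) := fun y =>
      memLp_of_lip_one (ν 0) (hν2 0) (hsec y)
    have hsecInt : ∀ y, Integrable (fun a => F (a, y)) (ν 0) := fun y =>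
      (hsecL2 y).integrable one_le_two
    have hglip : ∀ y y', |g y - g y'| ≤ L * ∑ j, |y j - y' j| := by
      intro y y'
      have hsub : g y - g y' = ∫ a, (F (a, y) - F (a, y')) ∂(ν 0) := by
        rw [integral_sub (hsecInt y) (hsecInt y')]
      rw [hsub]
      refine (le_trans (by
        simpa [Real.norm_eq_abs] using
          norm_integral_le_integral_norm (fun a => F (a, y) - F (a, y')) (μ := ν 0))) ?_
      have hmono : ∫ a, |F (a, y) - F (a, y')| ∂(ν 0)
          ≤ ∫ _a, L * ∑ j, |y j - y' j| ∂(ν 0) := by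
        refine integral_mono ((hsecInt y).sub (hsecInt y')).abs (integrable_const _)
          fun a => ?_
        have := hFlip a a y y'
        simpa using this
      simpa [measure_univ] using hmono
    have hgL2 : MemLp g 2 π' := memLp_of_l1_lip ν' hν2' hglip
    have hFi : Integrable F ρ := hFL2.integrable one_le_two
    have hFsq : Integrable (fun z => (F z - m) ^ 2) ρ :=
      (hFL2.sub (memLp_const m)).integrable_sq
    have hgm : ∫ y, g y ∂π' = m := by
      rw [← hm, integral_prod_symm F hFi]
    have key : ∫ x, (f x - m) ^ 2 ∂π = ∫ z, (F z - m) ^ 2 ∂ρ := by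
      rw [← mp.map_eq, integral_map_equiv]
      simp [hFd]
    rw [key, integral_prod_symm _ hFsq]
    set V0 := ∫ t, (t - ∫ s, s ∂(ν 0)) ^ 2 ∂(ν 0) with hV0d
    have hgsq : Integrable (fun y => (g y - m) ^ 2) π' :=
      (hgL2.sub (memLp_const m)).integrable_sq
    have hbd : ∀ y, ∫ a, (F (a, y) - m) ^ 2 ∂(ν 0) ≤ L ^ 2 * V0 + (g y - m) ^ 2 := by
      intro y
      rw [integral_sq_sub_const (ν 0) (hsecL2 y) m]
      have h2 := var_le_of_lip_one (ν 0) (hν2 0) hL (hsec y)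
      have hgy : (∫ a, F (a, y) ∂(ν 0)) = g y := rfl
      rw [hgy] at h2 ⊢
      rw [← hV0d] at h2
      linarith
    have step1 : ∫ y, (∫ a, (F (a, y) - m) ^ 2 ∂(ν 0)) ∂π'
        ≤ ∫ y, (L ^ 2 * V0 + (g y - m) ^ 2) ∂π' := by
      refine integral_mono_of_nonneg
        (Filter.Eventually.of_forall fun y => integral_nonneg fun a => sq_nonneg _)
        ((integrable_const _).add hgsq)
        (Filter.Eventually.of_forall hbd)
    refine step1.trans ?_
    rw [integral_add (integrable_const _) hgsq, integral_const]
    simp only [measure_univ, ENNReal.toReal_one, smul_eq_mul, one_mul, probReal_univ]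
    have hIH := IH ν' (fun j => hp _) hν2' L hL g hglip
    rw [← hπ'd, hgm] at hIH
    have hsum : (∑ i : Fin (N + 1), ∫ t, (t - ∫ s, s ∂(ν i)) ^ 2 ∂(ν i))
        = V0 + ∑ j : Fin N, ∫ t, (t - ∫ s, s ∂(ν' j)) ^ 2 ∂(ν' j) := by
      rw [Fin.sum_univ_succ]
    rw [hsum, mul_add]
    linarith

/-- The pressure as a function of the couplings. -/
noncomputable def Pfun (n : ℕ) (x : Finset (Fin n) → ℝ) : ℝ :=
  (n : ℝ)⁻¹ * Real.log (Zp n (Ham n x 0 0 fun _ => 0))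

lemma abs_spinProd {n : ℕ} (X : Finset (Fin n)) (σ : Fin n → Bool) :
    |spinProd X σ| = 1 := by
  rw [spinProd, Finset.abs_prod]
  refine Finset.prod_eq_one fun i _ => ?_
  rcases Bool.eq_false_or_eq_true (σ i) with h | h <;> simp [spinVal, h]

lemma Zp_pos (n : ℕ) (H : (Fin n → Bool) → ℝ) : 0 < Zp n H := by
  rw [Zp]
  exact Finset.sum_pos (fun σ _ => Real.exp_pos _) Finset.univ_nonempty

lemma negHam (n : ℕ) (x : Finset (Fin n) → ℝ) (σ : Fin n → Bool) :
    -(Ham n x 0 0 (fun _ => 0) σ) = ∑ X : Finset (Fin n), x X * spinProd X σ := by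
  simp [Ham]

lemma logZ_le (n : ℕ) (x y : Finset (Fin n) → ℝ) :
    Real.log (Zp n (Ham n x 0 0 fun _ => 0))
      ≤ Real.log (Zp n (Ham n y 0 0 fun _ => 0)) + ∑ X, |x X - y X| := by
  set c := ∑ X : Finset (Fin n), |x X - y X| with hc
  have hZ : Zp n (Ham n x 0 0 fun _ => 0)
      ≤ Real.exp c * Zp n (Ham n y 0 0 fun _ => 0) := by
    rw [Zp, Zp, Finset.mul_sum]
    refine Finset.sum_le_sum fun σ _ => ?_
    rw [← Real.exp_add]
    apply Real.exp_le_exp.2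
    rw [negHam, negHam]
    have hdiff : ∑ X : Finset (Fin n), x X * spinProd X σ
        - ∑ X : Finset (Fin n), y X * spinProd X σ ≤ c := by
      rw [← Finset.sum_sub_distrib, hc]
      refine Finset.sum_le_sum fun X _ => ?_
      have h1 : x X * spinProd X σ - y X * spinProd X σ
          = (x X - y X) * spinProd X σ := by ring
      rw [h1]
      calc (x X - y X) * spinProd X σ ≤ |(x X - y X) * spinProd X σ| := le_abs_self _
        _ = |x X - y X| := by rw [abs_mul, abs_spinProd, mul_one]
    linarith
  calc Real.log (Zp n (Ham n x 0 0 fun _ => 0))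
      ≤ Real.log (Real.exp c * Zp n (Ham n y 0 0 fun _ => 0)) := by
        apply Real.log_le_log (Zp_pos _ _) hZ
    _ = Real.log (Zp n (Ham n y 0 0 fun _ => 0)) + c := by
        rw [Real.log_mul (Real.exp_ne_zero c) (ne_of_gt (Zp_pos _ _)), Real.log_exp]
        ring
  
lemma Pfun_lip (n : ℕ) (x y : Finset (Fin n) → ℝ) :
    |Pfun n x - Pfun n y| ≤ (n : ℝ)⁻¹ * ∑ X, |x X - y X| := by
  have h1 := logZ_le n x y
  have h2 := logZ_le n y x
  have h3 : ∑ X : Finset (Fin n), |y X - x X| = ∑ X : Finset (Fin n), |x X - y X| := by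
    refine Finset.sum_congr rfl fun X _ => abs_sub_comm _ _
  rw [h3] at h2
  have habs : |Real.log (Zp n (Ham n x 0 0 fun _ => 0))
      - Real.log (Zp n (Ham n y 0 0 fun _ => 0))| ≤ ∑ X, |x X - y X| := by
    rw [abs_sub_le_iff]
    constructor <;> linarith
  rw [Pfun, Pfun, ← mul_sub, abs_mul, abs_of_nonneg (by positivity : (0:ℝ) ≤ (n:ℝ)⁻¹)]
  exact mul_le_mul_of_nonneg_left habs (by positivity)

end PressureConc

/-- Proposition B.1, concentration of the pressure: if the couplings
`J_X` are independent with finite second moments and `∑_X Var(J_X) ≤ C_P n`, then the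
pressure `P_n = n⁻¹ ln ∑_σ exp(∑_X J_X σ_X)` satisfies `E[(P_n - E P_n)²] ≤ C_P/n`. -/
theorem pressure_concentration
    {Ω : Type*} [MeasurableSpace Ω] (μ : Measure Ω) [IsProbabilityMeasure μ]
    (n : ℕ) (hn : 1 ≤ n) (C_P : ℝ) (hCP : 0 < C_P)
    (J : Ω → Finset (Fin n) → ℝ)
    (hJmeas : ∀ X, Measurable fun ω => J ω X)
    (hJindep : iIndepFun (fun X ω => J ω X) μ)
    (hJL2 : ∀ X, MemLp (fun ω => J ω X) 2 μ)
    (hVar : ∑ X : Finset (Fin n), variance (fun ω => J ω X) μ ≤ C_P * n) :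
    ∫ ω, ((n : ℝ)⁻¹ * Real.log (Zp n (Ham n (J ω) 0 0 fun _ => 0))
        - ∫ ω', (n : ℝ)⁻¹ * Real.log (Zp n (Ham n (J ω') 0 0 fun _ => 0)) ∂μ) ^ 2 ∂μ
      ≤ C_P / n := by
  classical
  set νm : (Finset (Fin n)) → Measure ℝ := fun X => Measure.map (fun ω => J ω X) μ with hνmd
  haveI hprob : ∀ X, IsProbabilityMeasure (νm X) := fun X =>
    Measure.isProbabilityMeasure_map (hJmeas X).aemeasurable
  have hT : Measurable J := measurable_pi_lambda J hJmeas
  have hν2m : ∀ X, MemLp id 2 (νm X) := fun X =>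
    (memLp_map_measure_iff aestronglyMeasurable_id (hJmeas X).aemeasurable).mpr (hJL2 X)
  -- the pushforward of μ under J is the product measure
  have hmap : Measure.map J μ = Measure.pi νm := by
    refine (Measure.pi_eq fun s hs => ?_).symm
    rw [Measure.map_apply hT (MeasurableSet.univ_pi hs)]
    have hpre : J ⁻¹' Set.pi Set.univ s = ⋂ X ∈ (Finset.univ : Finset (Finset (Fin n))),
        (fun ω => J ω X) ⁻¹' s X := by
      ext ω; simp [Set.mem_pi]
    rw [hpre, hJindep.measure_inter_preimage_eq_mul Finset.univ (fun X _ => hs X)]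
    exact Finset.prod_congr rfl fun X _ =>
      (Measure.map_apply (hJmeas X) (hs X)).symm
  set Pm := Measure.pi νm with hPmd
  haveI : IsProbabilityMeasure Pm := by rw [hPmd]; infer_instance
  have hPlip : ∀ x y : (Finset (Fin n)) → ℝ, |PressureConc.Pfun n x - PressureConc.Pfun n y|
      ≤ (n : ℝ)⁻¹ * ∑ X, |x X - y X| := PressureConc.Pfun_lip n
  have hPcont : Continuous (PressureConc.Pfun n) := PressureConc.continuous_of_l1_lip hPlip
  -- transfer the expectation and the variance integral to the product space
  have hmean : ∫ ω', (n : ℝ)⁻¹ * Real.log (Zp n (Ham n (J ω') 0 0 fun _ => 0)) ∂μ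
      = ∫ z, PressureConc.Pfun n z ∂Pm := by
    rw [← hmap, integral_map hT.aemeasurable hPcont.aestronglyMeasurable]
    rfl
  set m := ∫ z, PressureConc.Pfun n z ∂Pm with hmd
  have hvarT : ∫ ω, ((n : ℝ)⁻¹ * Real.log (Zp n (Ham n (J ω) 0 0 fun _ => 0))
        - ∫ ω', (n : ℝ)⁻¹ * Real.log (Zp n (Ham n (J ω') 0 0 fun _ => 0)) ∂μ) ^ 2 ∂μ
      = ∫ z, (PressureConc.Pfun n z - m) ^ 2 ∂Pm := by
    rw [hmean]
    have hcont2 : Continuous fun z : (Finset (Fin n)) → ℝ => (PressureConc.Pfun n z - m) ^ 2 :=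
      ((hPcont.sub continuous_const).pow 2)
    rw [← hmap, integral_map hT.aemeasurable hcont2.aestronglyMeasurable]
    rfl
  rw [hvarT]
  -- reindex by an equivalence with `Fin M`
  set M := Fintype.card (Finset (Fin n)) with hMd
  set ee : Fin M ≃ (Finset (Fin n)) := (Fintype.equivFin (Finset (Fin n))).symm with heed
  set φ := MeasurableEquiv.piCongrLeft (fun _ : (Finset (Fin n)) => ℝ) ee with hφd
  have mpre : MeasurePreserving φ (Measure.pi fun i => νm (ee i)) Pm :=
    measurePreserving_piCongrLeft νm ee
  have hφap : ∀ (x : Fin M → ℝ) (X : (Finset (Fin n))), φ x X = x (ee.symm X) := by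
    intro x X
    rw [hφd]
    show (Equiv.piCongrLeft (fun _ : (Finset (Fin n)) => ℝ) ee) x X = x (ee.symm X)
    have : X = ee (ee.symm X) := (Equiv.apply_symm_apply ee X).symm
    rw [this, Equiv.piCongrLeft_apply_apply, Equiv.symm_apply_apply]
  haveI : ∀ i, IsProbabilityMeasure ((fun i => νm (ee i)) i) := fun i => hprob _
  set f' : (Fin M → ℝ) → ℝ := fun x => PressureConc.Pfun n (φ x) with hf'd
  have hf'lip : ∀ x y, |f' x - f' y| ≤ (n : ℝ)⁻¹ * ∑ i, |x i - y i| := by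
    intro x y
    refine (hPlip (φ x) (φ y)).trans (le_of_eq ?_)
    congr 1
    rw [← Equiv.sum_comp ee.symm (fun i => |x i - y i|)]
    exact Finset.sum_congr rfl fun X _ => by rw [hφap, hφap]
  have hkey := PressureConc.var_tensor M (fun i => νm (ee i)) (fun i => hprob _)
    (fun i => hν2m _) ((n : ℝ)⁻¹) (by positivity) f' hf'lip
  -- transfer the integrals along φ
  have hmean2 : ∫ y, f' y ∂(Measure.pi fun i => νm (ee i)) = m := by
    rw [hmd]
    exact mpre.integral_comp φ.measurableEmbedding (PressureConc.Pfun n)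
  rw [hmean2] at hkey
  have hvar2 : ∫ x, (f' x - m) ^ 2 ∂(Measure.pi fun i => νm (ee i))
      = ∫ z, (PressureConc.Pfun n z - m) ^ 2 ∂Pm := by
    exact mpre.integral_comp φ.measurableEmbedding
      (fun z => (PressureConc.Pfun n z - m) ^ 2)
  rw [hvar2] at hkey
  refine hkey.trans ?_
  -- identify the coordinate variances
  have hvarX : ∀ X : (Finset (Fin n)), ∫ t, (t - ∫ s, s ∂(νm X)) ^ 2 ∂(νm X)
      = variance (fun ω => J ω X) μ := by
    intro X
    have hc : ∫ s, s ∂(νm X) = ∫ ω, J ω X ∂μ := by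
      rw [hνmd]
      exact integral_map (hJmeas X).aemeasurable aestronglyMeasurable_id
    set c := ∫ ω, J ω X ∂μ with hcd
    rw [hc]
    have h1 : ∫ t, (t - c) ^ 2 ∂(νm X) = ∫ ω, (J ω X - c) ^ 2 ∂μ := by
      rw [hνmd]
      exact integral_map (hJmeas X).aemeasurable
        (((continuous_id.sub continuous_const).pow 2).aestronglyMeasurable)
    rw [h1, variance_eq_integral (hJmeas X).aemeasurable]
  have hsumeq : ∑ i : Fin M, ∫ t, (t - ∫ s, s ∂(νm (ee i))) ^ 2 ∂(νm (ee i))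
      = ∑ X : (Finset (Fin n)), variance (fun ω => J ω X) μ := by
    rw [← Equiv.sum_comp ee (fun X => variance (fun ω => J ω X) μ)]
    exact Finset.sum_congr rfl fun i _ => hvarX (ee i)
  rw [hsumeq]
  -- final arithmetic
  have hn' : (0:ℝ) < n := by exact_mod_cast Nat.lt_of_lt_of_le Nat.zero_lt_one hn
  have hle : ((n : ℝ)⁻¹) ^ 2 * ∑ X : (Finset (Fin n)), variance (fun ω => J ω X) μ
      ≤ ((n : ℝ)⁻¹) ^ 2 * (C_P * n) :=
    mul_le_mul_of_nonneg_left hVar (by positivity)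
  refine hle.trans (le_of_eq ?_)
  field_simp
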